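/- Let M be a matroid on the ground set [n] and let w ∈ ℝ^n. Then w lies in the Bergman fan B̃(M) if and only if the convex hull of the indicator vectors e_σ of the w-maximal bases σ of M contains a point all of whose n coordinates are strictly positive. -/

import Mathlib

open Finset Pointwise

/-- The 0/1 indicator vector (in `ℝ^n`) of a finite set of coordinates. -/
def indVec {n : ℕ} (S : Finset (Fin n)) : Fin n → ℝ := fun i => if i ∈ S then 1 else 0

/-- Independence with respect to a family `𝔅` of bases: being contained in a basis. -/
def FamIndep {n : ℕ} (𝔅 : Finset (Finset (Fin n))) (I : Finset (Fin n)) : Prop :=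
  ∃ B ∈ 𝔅, I ⊆ B

/-- Circuits of the family `𝔅`: minimal dependent sets. -/
def FamCircuit {n : ℕ} (𝔅 : Finset (Finset (Fin n))) (C : Finset (Fin n)) : Prop :=
  ¬ FamIndep 𝔅 C ∧ ∀ D ⊂ C, FamIndep 𝔅 D

open scoped Classical in
/-- The rank of a set: maximal cardinality of an independent subset. -/
noncomputable def famRk {n : ℕ} (𝔅 : Finset (Finset (Fin n))) (F : Finset (Fin n)) : ℕ :=
  (F.powerset.filter (fun I => FamIndep 𝔅 I)).sup Finset.card

open scoped Classical in
/-- The bases of the restriction to `F`: the maximal independent subsets of `F`. -/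
noncomputable def famRestrictBases {n : ℕ} (𝔅 : Finset (Finset (Fin n)))
    (F : Finset (Fin n)) : Finset (Finset (Fin n)) :=
  F.powerset.filter fun B =>
    FamIndep 𝔅 B ∧ ∀ B' ⊆ F, FamIndep 𝔅 B' → B ⊆ B' → B = B'

open scoped Classical in
/-- The bases of the contraction by `F`: the sets `B \ F` where `B` is a basis meeting `F`
in a set of full rank `rk F`. -/
noncomputable def famContractBases {n : ℕ} (𝔅 : Finset (Finset (Fin n)))
    (F : Finset (Fin n)) : Finset (Finset (Fin n)) :=
  (𝔅.filter fun B => (B ∩ F).card = famRk 𝔅 F).image (· \ F)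

/-- `i` and `j` are related if equal or contained in a common circuit. -/
def FamConnRel {n : ℕ} (𝔅 : Finset (Finset (Fin n))) (i j : Fin n) : Prop :=
  i = j ∨ ∃ C, FamCircuit 𝔅 C ∧ i ∈ C ∧ j ∈ C

/-- Number of connected components: number of classes of the equivalence relation
generated by `FamConnRel`. -/
noncomputable def famNumComponents {n : ℕ} (𝔅 : Finset (Finset (Fin n))) : ℕ :=
  Nat.card (Quot (FamConnRel 𝔅))

/-- Connectedness of the matroid presented by bases `𝔅` on the ground set `E`:
any two distinct elements of `E` lie in a common circuit (within `E`). -/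
def FamConnectedOn {n : ℕ} (𝔅 : Finset (Finset (Fin n))) (E : Finset (Fin n)) : Prop :=
  ∀ i ∈ E, ∀ j ∈ E, i ≠ j → ∃ C, C ⊆ E ∧ FamCircuit 𝔅 C ∧ i ∈ C ∧ j ∈ C

/-- A matroid of rank `r` on the ground set `Fin n`, given by its collection of bases:
`r`-element sets satisfying the basis exchange axiom. -/
structure FinMatroid (n r : ℕ) where
  bases : Finset (Finset (Fin n))
  bases_nonempty : bases.Nonempty
  card_bases : ∀ B ∈ bases, B.card = r
  exchange : ∀ B₁ ∈ bases, ∀ B₂ ∈ bases, ∀ i ∈ B₁ \ B₂,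
      ∃ j ∈ B₂ \ B₁, insert j (B₁.erase i) ∈ bases

namespace FinMatroid

variable {n r : ℕ}

def Indep (M : FinMatroid n r) (I : Finset (Fin n)) : Prop := FamIndep M.bases I

def IsCircuit (M : FinMatroid n r) (C : Finset (Fin n)) : Prop := FamCircuit M.bases C

noncomputable def rk (M : FinMatroid n r) (F : Finset (Fin n)) : ℕ := famRk M.bases F

/-- A flat: no circuit leaves exactly one element outside `F`. -/
def IsFlat (M : FinMatroid n r) (F : Finset (Fin n)) : Prop :=
  ∀ C, M.IsCircuit C → (C \ F).card ≠ 1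

open scoped Classical in
/-- Closure of a set: the intersection of all flats containing it (the smallest flat
containing it). -/
noncomputable def closure (M : FinMatroid n r) (S : Finset (Fin n)) : Finset (Fin n) :=
  Finset.univ.filter fun i => ∀ F, M.IsFlat F → S ⊆ F → i ∈ F

/-- No single element is dependent. -/
def Loopless (M : FinMatroid n r) : Prop := ∀ i : Fin n, M.Indep {i}

noncomputable def numComponents (M : FinMatroid n r) : ℕ := famNumComponents M.bases

/-- Any two distinct elements lie in a common circuit. -/
def Connected (M : FinMatroid n r) : Prop :=
  ∀ i j : Fin n, i ≠ j → ∃ C, M.IsCircuit C ∧ i ∈ C ∧ j ∈ C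

/-- `B` is a `w`-maximal basis of `M`. -/
def IsMaxBasis (M : FinMatroid n r) (w : Fin n → ℝ) (B : Finset (Fin n)) : Prop :=
  B ∈ M.bases ∧ ∀ B' ∈ M.bases, ∑ i ∈ B', w i ≤ ∑ i ∈ B, w i

open scoped Classical in
/-- The bases of the matroid `M_w`: the `w`-maximal bases of `M`. -/
noncomputable def maxBases (M : FinMatroid n r) (w : Fin n → ℝ) :
    Finset (Finset (Fin n)) :=
  M.bases.filter fun B => ∀ B' ∈ M.bases, ∑ i ∈ B', w i ≤ ∑ i ∈ B, w i

/-- Membership in the Bergman fan: on every circuit the minimum of `w` is attained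
at least twice. -/
def InBergmanFan (M : FinMatroid n r) (w : Fin n → ℝ) : Prop :=
  ∀ C, M.IsCircuit C → ∃ i ∈ C, ∃ j ∈ C, i ≠ j ∧ w i = w j ∧ ∀ k ∈ C, w i ≤ w k

/-- The matroid polytope: convex hull of the indicator vectors of the bases. -/
noncomputable def polytope (M : FinMatroid n r) : Set (Fin n → ℝ) :=
  convexHull ℝ (indVec '' ↑M.bases)

noncomputable def restrictBases (M : FinMatroid n r) (F : Finset (Fin n)) :
    Finset (Finset (Fin n)) :=
  famRestrictBases M.bases F

noncomputable def contractBases (M : FinMatroid n r) (F : Finset (Fin n)) :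
    Finset (Finset (Fin n)) :=
  famContractBases M.bases F

/-- `𝓖` is a building set in the lattice of flats of `M` (with bottom element `∅` and
join = closure of union): for every nonempty flat `X`, the join map is an order
isomorphism from the product of the lower intervals of the maximal elements of
`𝓖` below `X` onto the lower interval of `X`. -/
def IsFlatBuilding (M : FinMatroid n r) (𝓖 : Set (Finset (Fin n))) : Prop :=
  (∀ F ∈ 𝓖, M.IsFlat F ∧ F ≠ ∅) ∧
  ∀ X, M.IsFlat X → X ≠ ∅ →
    ∃ (k : ℕ) (g : Fin k → Finset (Fin n)),
      Function.Injective g ∧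
      (∀ i, g i ∈ 𝓖 ∧ g i ⊆ X) ∧
      (∀ i, ∀ H ∈ 𝓖, H ⊆ X → g i ⊆ H → g i = H) ∧
      (∀ H ∈ 𝓖, H ⊆ X → ∃ i, H ⊆ g i) ∧
      ∃ e : (∀ i : Fin k, {F : Finset (Fin n) // M.IsFlat F ∧ F ⊆ g i}) ≃o
              {F : Finset (Fin n) // M.IsFlat F ∧ F ⊆ X},
        ∀ y, (e y).1 = M.closure (Finset.univ.sup fun i => (y i).1)

/-- `S` is nested with respect to `𝓖` (in the lattice of flats of `M`): `S ⊆ 𝓖` and for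
every subcollection of at least two pairwise incomparable members, their join (the
closure of their union) is not in `𝓖`. -/
def IsNested (M : FinMatroid n r) (𝓖 : Set (Finset (Fin n)))
    (S : Finset (Finset (Fin n))) : Prop :=
  ↑S ⊆ 𝓖 ∧ ∀ T ⊆ S, 2 ≤ T.card →
    (∀ A ∈ T, ∀ B ∈ T, A ≠ B → ¬ A ⊆ B ∧ ¬ B ⊆ A) →
    M.closure (T.sup id) ∉ 𝓖

end FinMatroid

/-- A building set in the Boolean lattice of subsets of `Fin r`: for every nonempty
`X ⊆ [r]`, the union map is an order isomorphism from the product of the lower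
intervals of the maximal elements of `𝓕` below `X` onto the lower interval of `X`. -/
def BoolBuilding {r : ℕ} (𝓕 : Set (Finset (Fin r))) : Prop :=
  (∀ F ∈ 𝓕, F ≠ ∅) ∧
  ∀ X : Finset (Fin r), X ≠ ∅ →
    ∃ (k : ℕ) (g : Fin k → Finset (Fin r)),
      Function.Injective g ∧
      (∀ i, g i ∈ 𝓕 ∧ g i ⊆ X) ∧
      (∀ i, ∀ H ∈ 𝓕, H ⊆ X → g i ⊆ H → g i = H) ∧
      (∀ H ∈ 𝓕, H ⊆ X → ∃ i, H ⊆ g i) ∧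
      ∃ e : (∀ i : Fin k, {F : Finset (Fin r) // F ⊆ g i}) ≃o
              {F : Finset (Fin r) // F ⊆ X},
        ∀ y, (e y).1 = Finset.univ.sup fun i => (y i).1

/-- `S` is nested with respect to `𝓕` in the Boolean lattice: for every subcollection
of at least two pairwise incomparable members, their union is not in `𝓕`. -/
def BoolNested {r : ℕ} (𝓕 : Set (Finset (Fin r))) (S : Finset (Finset (Fin r))) : Prop :=
  ↑S ⊆ 𝓕 ∧ ∀ T ⊆ S, 2 ≤ T.card →
    (∀ A ∈ T, ∀ B ∈ T, A ≠ B → ¬ A ⊆ B ∧ ¬ B ⊆ A) →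
    T.sup id ∉ 𝓕

/-- The simplex `Δ_F = conv{e_i : i ∈ F}`. -/
noncomputable def faceSimplex {r : ℕ} (F : Finset (Fin r)) : Set (Fin r → ℝ) :=
  convexHull ℝ ((fun i => (Pi.single i 1 : Fin r → ℝ)) '' ↑F)

/-- The Minkowski sum `Δ_𝓕 = Σ_{F ∈ 𝓕} Δ_F`. -/
noncomputable def minkSum {r : ℕ} (𝓕 : Finset (Finset (Fin r))) : Set (Fin r → ℝ) :=
  ∑ F ∈ 𝓕, faceSimplex F
namespace Statement3Aux

open FinMatroid

variable {n r : ℕ}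

lemma famIndep_subset {𝔅 : Finset (Finset (Fin n))} {I J : Finset (Fin n)}
    (h : FamIndep 𝔅 I) (hJI : J ⊆ I) : FamIndep 𝔅 J := by
  obtain ⟨B, hB, hIB⟩ := h; exact ⟨B, hB, hJI.trans hIB⟩

lemma exists_circuit {𝔅 : Finset (Finset (Fin n))} (D : Finset (Fin n))
    (hD : ¬ FamIndep 𝔅 D) : ∃ C ⊆ D, FamCircuit 𝔅 C := by
  induction D using Finset.strongInduction with
  | _ D ih =>
    by_cases h : ∀ D' ⊂ D, FamIndep 𝔅 D'
    · exact ⟨D, Finset.Subset.refl _, hD, h⟩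
    · push_neg at h
      obtain ⟨D', hsub, hD'⟩ := h
      obtain ⟨C, hCD, hC⟩ := ih D' hsub hD'
      exact ⟨C, hCD.trans hsub.subset, hC⟩

noncomputable def toM (M : FinMatroid n r) : Matroid (Fin n) :=
  Matroid.ofIsBaseOfFinite Set.finite_univ (fun S => ∃ B ∈ M.bases, ↑B = S)
    ⟨↑M.bases_nonempty.choose, M.bases_nonempty.choose, M.bases_nonempty.choose_spec, rfl⟩
    (by
      rintro X Y ⟨B₁, hB₁, rfl⟩ ⟨B₂, hB₂, rfl⟩ a ha
      have ha' : a ∈ B₁ \ B₂ := by simpa using ha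
      obtain ⟨j, hj, hins⟩ := M.exchange B₁ hB₁ B₂ hB₂ a ha'
      refine ⟨j, by simpa using hj, insert j (B₁.erase a), hins, ?_⟩
      simp)
    (fun _ _ => Set.subset_univ _)

lemma toM_base {M : FinMatroid n r} {S : Set (Fin n)} :
    (toM M).IsBase S ↔ ∃ B ∈ M.bases, ↑B = S := Iff.rfl

lemma toM_ground {M : FinMatroid n r} : (toM M).E = Set.univ := rfl

lemma toM_indep {M : FinMatroid n r} {I : Finset (Fin n)} :
    (toM M).Indep ↑I ↔ FamIndep M.bases I := by
  rw [Matroid.indep_iff]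
  constructor
  · rintro ⟨S, hS, hIS⟩
    obtain ⟨B, hB, rfl⟩ := toM_base.mp hS
    exact ⟨B, hB, by exact_mod_cast hIS⟩
  · rintro ⟨B, hB, hIB⟩
    exact ⟨↑B, toM_base.mpr ⟨B, hB, rfl⟩, by exact_mod_cast hIB⟩

lemma indep_card_le {M : FinMatroid n r} {I : Finset (Fin n)}
    (h : FamIndep M.bases I) : I.card ≤ r := by
  obtain ⟨B, hB, hIB⟩ := h
  calc I.card ≤ B.card := Finset.card_le_card hIB
  _ = r := M.card_bases B hB

lemma mem_bases_of_indep_card {M : FinMatroid n r} {I : Finset (Fin n)}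
    (h : FamIndep M.bases I) (hcard : I.card = r) : I ∈ M.bases := by
  obtain ⟨B, hB, hIB⟩ := h
  have : I = B := Finset.eq_of_subset_of_card_le hIB (by rw [hcard, M.card_bases B hB])
  exact this ▸ hB

lemma circuit_mem_closure {M : FinMatroid n r} {C : Finset (Fin n)} (hC : FamCircuit M.bases C)
    {i : Fin n} (hiC : i ∈ C) : i ∈ (toM M).closure ↑(C.erase i) := by
  have hCe : (toM M).Indep ↑(C.erase i) := toM_indep.mpr (hC.2 _ (Finset.erase_ssubset hiC))
  refine (hCe.mem_closure_iff_of_notMem (by simp)).mpr ?_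
  rw [Matroid.dep_iff]
  refine ⟨?_, fun _ _ => trivial⟩
  rw [show (insert i ↑(C.erase i) : Set (Fin n)) = ↑(insert i (C.erase i)) by simp,
    Finset.insert_erase hiC, toM_indep]
  exact hC.1

lemma not_mem_closure_erase {M : FinMatroid n r} {B : Finset (Fin n)} (hB : B ∈ M.bases)
    {i : Fin n} (hiB : i ∈ B) : i ∉ (toM M).closure ↑(B.erase i) := by
  have hBind : (toM M).Indep ↑B := toM_indep.mpr ⟨B, hB, Finset.Subset.refl _⟩
  have := (Matroid.indep_iff_forall_notMem_closure_diff (M := toM M)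
    (fun _ _ => trivial)).mp hBind (by exact_mod_cast hiB)
  rwa [show (↑B \ {i} : Set (Fin n)) = ↑(B.erase i) by simp [Finset.coe_erase]] at this

lemma swapA (M : FinMatroid n r) {B C : Finset (Fin n)} (hB : B ∈ M.bases)
    (hC : FamCircuit M.bases C) {i : Fin n} (hiB : i ∈ B) (hiC : i ∈ C) :
    ∃ j ∈ C, j ∉ B ∧ insert j (B.erase i) ∈ M.bases := by
  by_contra h
  push_neg at h
  have hBe : (toM M).Indep ↑(B.erase i) :=
    toM_indep.mpr (famIndep_subset ⟨B, hB, Finset.Subset.refl _⟩ (Finset.erase_subset _ _))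
  have hsub : (↑(C.erase i) : Set (Fin n)) ⊆ (toM M).closure ↑(B.erase i) := by
    intro j hj
    have hj' : j ∈ C.erase i := by exact_mod_cast hj
    have hji : j ≠ i := (Finset.mem_erase.mp hj').1
    have hjC : j ∈ C := (Finset.mem_erase.mp hj').2
    by_cases hjB : j ∈ B
    · exact (toM M).subset_closure _ (fun _ _ => trivial)
        (by exact_mod_cast Finset.mem_erase.mpr ⟨hji, hjB⟩)
    · have hjBe : j ∉ B.erase i := fun hm => hjB (Finset.mem_of_mem_erase hm)
      refine (hBe.mem_closure_iff_of_notMem (by exact_mod_cast hjBe)).mpr ?_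
      rw [Matroid.dep_iff]
      refine ⟨?_, fun _ _ => trivial⟩
      rw [show (insert j ↑(B.erase i) : Set (Fin n)) = ↑(insert j (B.erase i)) by simp, toM_indep]
      intro hind
      exact h j hjC hjB (mem_bases_of_indep_card hind (by
        rw [Finset.card_insert_of_notMem hjBe, Finset.card_erase_of_mem hiB,
          M.card_bases B hB]
        have hr : 1 ≤ r := by
          rw [← M.card_bases B hB]; exact Finset.card_pos.mpr ⟨i, hiB⟩
        omega))
  have hiCl : i ∈ (toM M).closure ↑(B.erase i) :=
    (toM M).closure_subset_closure_of_subset_closure hsub (circuit_mem_closure hC hiC)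
  exact not_mem_closure_erase hB hiB hiCl

lemma swapB (M : FinMatroid n r) {B C : Finset (Fin n)} (hB : B ∈ M.bases)
    (hC : FamCircuit M.bases C) {i j : Fin n} (hiB : i ∉ B) (hCsub : C ⊆ insert i B)
    (hiC : i ∈ C) (hjC : j ∈ C) (hji : j ≠ i) :
    insert i (B.erase j) ∈ M.bases := by
  have hjB : j ∈ B := by
    have := hCsub hjC
    rw [Finset.mem_insert] at this
    tauto
  have hiBe : i ∉ B.erase j := fun hm => hiB (Finset.mem_of_mem_erase hm)
  have hBe : (toM M).Indep ↑(B.erase j) :=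
    toM_indep.mpr (famIndep_subset ⟨B, hB, Finset.Subset.refl _⟩ (Finset.erase_subset _ _))
  have hcard : (insert i (B.erase j)).card = r := by
    rw [Finset.card_insert_of_notMem hiBe, Finset.card_erase_of_mem hjB, M.card_bases B hB]
    have hr : 1 ≤ r := by
      rw [← M.card_bases B hB]; exact Finset.card_pos.mpr ⟨j, hjB⟩
    omega
  refine mem_bases_of_indep_card ?_ hcard
  by_contra hind
  -- i ∈ closure (B.erase j)
  have hicl : i ∈ (toM M).closure ↑(B.erase j) := by
    refine (hBe.mem_closure_iff_of_notMem (by exact_mod_cast hiBe)).mpr ?_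
    rw [Matroid.dep_iff]
    refine ⟨?_, fun _ _ => trivial⟩
    rw [show (insert i ↑(B.erase j) : Set (Fin n)) = ↑(insert i (B.erase j)) by simp, toM_indep]
    exact hind
  -- j ∈ closure (C.erase j) ⊆ closure (insert i (B.erase j)) = closure (B.erase j)
  have hCsub' : (↑(C.erase j) : Set (Fin n)) ⊆ insert i ↑(B.erase j) := by
    intro x hx
    have hx' : x ∈ C.erase j := by exact_mod_cast hx
    have hxj : x ≠ j := (Finset.mem_erase.mp hx').1
    have hxC : x ∈ C := (Finset.mem_erase.mp hx').2
    have := hCsub hxC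
    rw [Finset.mem_insert] at this
    rcases this with h1 | h1
    · exact Set.mem_insert_iff.mpr (Or.inl (by exact_mod_cast h1))
    · exact Set.mem_insert_iff.mpr (Or.inr (by exact_mod_cast Finset.mem_erase.mpr ⟨hxj, h1⟩))
  have hjcl : j ∈ (toM M).closure ↑(B.erase j) := by
    have h1 : j ∈ (toM M).closure (insert i ↑(B.erase j)) :=
      (toM M).closure_subset_closure hCsub' (circuit_mem_closure hC hjC)
    rwa [Matroid.closure_insert_eq_of_mem_closure hicl] at h1
  exact not_mem_closure_erase hB hjB hjcl

lemma exists_maxBasis (M : FinMatroid n r) (w : Fin n → ℝ) :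
    ∃ B, M.IsMaxBasis w B := by
  obtain ⟨B, hB, hmax⟩ := M.bases.exists_max_image (fun B => ∑ i ∈ B, w i) M.bases_nonempty
  exact ⟨B, hB, hmax⟩

lemma bergman_iff_cover (M : FinMatroid n r) (w : Fin n → ℝ) :
    M.InBergmanFan w ↔ ∀ i : Fin n, ∃ B, M.IsMaxBasis w B ∧ i ∈ B := by
  constructor
  · intro hberg i
    obtain ⟨B, hB, hmax⟩ := exists_maxBasis M w
    by_cases hiB : i ∈ B
    · exact ⟨B, ⟨hB, hmax⟩, hiB⟩
    · have hdep : ¬ FamIndep M.bases (insert i B) := by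
        intro hind
        have := indep_card_le hind
        rw [Finset.card_insert_of_notMem hiB, M.card_bases B hB] at this
        omega
      obtain ⟨C, hCsub, hC⟩ := exists_circuit _ hdep
      have hiC : i ∈ C := by
        by_contra hiC
        refine hC.1 (famIndep_subset ⟨B, hB, Finset.Subset.refl _⟩ ?_)
        intro x hx
        have := hCsub hx
        rw [Finset.mem_insert] at this
        rcases this with h1 | h1
        · exact absurd (h1 ▸ hx) hiC
        · exact h1
      obtain ⟨a, haC, b, hbC, hab, hwab, hmin⟩ := hberg C hC
      -- choose j ∈ {a, b} with j ≠ i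
      obtain ⟨j, hjC, hji, hwj⟩ : ∃ j ∈ C, j ≠ i ∧ w j ≤ w i := by
        by_cases hai : a = i
        · exact ⟨b, hbC, fun hbi => hab (by rw [hai, hbi]), by
            rw [← hwab]; exact hmin i hiC⟩
        · exact ⟨a, haC, hai, hmin i hiC⟩
      have hB' := swapB M hB hC hiB hCsub hiC hjC hji
      have hjB : j ∈ B := by
        have := hCsub hjC
        rw [Finset.mem_insert] at this
        tauto
      have hsum : ∑ k ∈ B, w k ≤ ∑ k ∈ insert i (B.erase j), w k := by
        rw [Finset.sum_insert (fun hm => hiB (Finset.mem_of_mem_erase hm)),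
          Finset.sum_erase_eq_sub hjB]
        linarith
      refine ⟨insert i (B.erase j), ⟨hB', fun B'' hB'' => le_trans (hmax B'' hB'') hsum⟩,
        Finset.mem_insert_self _ _⟩
  · intro hcov C hC
    have hCne : C.Nonempty := by
      rcases Finset.eq_empty_or_nonempty C with h | h
      · exfalso
        refine hC.1 ?_
        obtain ⟨B, hB⟩ := M.bases_nonempty
        exact ⟨B, hB, by simp [h]⟩
      · exact h
    obtain ⟨i, hiC, hmin⟩ := C.exists_min_image w hCne
    by_cases htwo : ∃ j ∈ C, j ≠ i ∧ w j = w i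
    · obtain ⟨j, hjC, hji, hwj⟩ := htwo
      exact ⟨i, hiC, j, hjC, fun h => hji h.symm, hwj.symm, hmin⟩
    · exfalso
      push_neg at htwo
      obtain ⟨B, ⟨hB, hmax⟩, hiB⟩ := hcov i
      obtain ⟨j, hjC, hjB, hB'⟩ := swapA M hB hC hiB hiC
      have hji : j ≠ i := fun h => hjB (h ▸ hiB)
      have hwj : w i < w j := lt_of_le_of_ne (hmin j hjC) (fun h => htwo j hjC hji (h ▸ rfl))
      have hsum : ∑ k ∈ B, w k < ∑ k ∈ insert j (B.erase i), w k := by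
        rw [Finset.sum_insert (fun hm => hjB (Finset.mem_of_mem_erase hm)),
          Finset.sum_erase_eq_sub hiB]
        linarith
      exact absurd (hmax _ hB') (not_le.mpr hsum)

open scoped Classical in
lemma cover_iff_pos (M : FinMatroid n r) (w : Fin n → ℝ) :
    (∀ i : Fin n, ∃ B, M.IsMaxBasis w B ∧ i ∈ B) ↔
    ∃ x ∈ convexHull ℝ (indVec '' {B | M.IsMaxBasis w B}), ∀ i, 0 < x i := by
  constructor
  · intro hcov
    set S : Finset (Finset (Fin n)) :=
      (Finset.univ.powerset).filter (fun B => M.IsMaxBasis w B) with hS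
    have hmemS : ∀ B, B ∈ S ↔ M.IsMaxBasis w B := by
      intro B; simp [hS, Finset.mem_filter, Finset.mem_powerset]
    have hSne : S.Nonempty := by
      obtain ⟨B, hB⟩ := exists_maxBasis M w
      exact ⟨B, (hmemS B).mpr hB⟩
    have hcardpos : (0:ℝ) < (S.card : ℝ) := by
      exact_mod_cast Finset.card_pos.mpr hSne
    refine ⟨S.centerMass (fun _ => (1:ℝ)) indVec, ?_, ?_⟩
    · refine Finset.centerMass_mem_convexHull S (fun _ _ => zero_le_one) ?_ ?_
      · simpa using hcardpos
      · intro B hB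
        exact Set.mem_image_of_mem _ ((hmemS B).mp hB)
    · intro i
      have hx : S.centerMass (fun _ => (1:ℝ)) indVec = (S.card : ℝ)⁻¹ • ∑ B ∈ S, indVec B := by
        simp [Finset.centerMass]
      rw [hx]
      have : ((S.card : ℝ)⁻¹ • ∑ B ∈ S, indVec B) i
          = (S.card : ℝ)⁻¹ * ∑ B ∈ S, indVec B i := by
        simp [Finset.sum_apply]
      rw [this]
      refine mul_pos (inv_pos.mpr hcardpos) ?_
      refine Finset.sum_pos' (fun B _ => by unfold indVec; positivity) ?_
      obtain ⟨B, hBmax, hiB⟩ := hcov i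
      exact ⟨B, (hmemS B).mpr hBmax, by simp [indVec, hiB]⟩
  · rintro ⟨x, hx, hpos⟩ i
    by_contra hnone
    push_neg at hnone
    have hsub : indVec '' {B | M.IsMaxBasis w B} ⊆ {y : Fin n → ℝ | y i = 0} := by
      rintro y ⟨B, hB, rfl⟩
      have : i ∉ B := fun hiB => hnone B hB hiB
      simp [indVec, this]
    have hconv : Convex ℝ {y : Fin n → ℝ | y i = 0} := by
      intro y hy z hz a b _ _ _
      simp only [Set.mem_setOf_eq] at hy hz ⊢
      simp [hy, hz]
    have := convexHull_min hsub hconv hx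
    exact absurd this.symm (ne_of_lt (hpos i))

end Statement3Aux

/-- `w` lies in the Bergman fan iff the convex hull of the indicator
vectors of the `w`-maximal bases contains a strictly positive point. -/
theorem statement3 {n r : ℕ} (M : FinMatroid n r) (w : Fin n → ℝ) :
    M.InBergmanFan w ↔
      ∃ x ∈ convexHull ℝ (indVec '' {B | M.IsMaxBasis w B}), ∀ i, 0 < x i := by
  rw [Statement3Aux.bergman_iff_cover]
  exact Statement3Aux.cover_iff_pos M w
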